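/- Let a, b satisfy 1 ≤ −1/a ≤ b+1 and a−1 ≤ −1/b ≤ −1 (in particular a < 0 < b). Define the region D̂ = [a, 1−1/b]×[−1,0] ∪ [1−1/b, a+1]×[−1/2,0] ∪ [b−1, −1/a−1]×[0,1/2] ∪ [−1/a−1, b]×[0,1]. Then ∫∫_{D̂} dx dy/(1+xy)² = log[(1+b)(1−a)]. -/

import Mathlib

open Real intervalIntegral Set

lemma inner_eq (x c d : ℝ) (h : ∀ y ∈ Set.uIcc c d, 0 < 1 + x * y) :
    ∫ y in c..d, ((1 + x * y) ^ 2)⁻¹ = d / (1 + x * d) - c / (1 + x * c) := by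
  have hcont : ContinuousOn (fun y : ℝ => ((1 + x * y) ^ 2)⁻¹) (Set.uIcc c d) := by
    apply ContinuousOn.inv₀
    · exact ((continuous_const.add (continuous_const.mul continuous_id)).pow 2).continuousOn
    · intro y hy
      exact pow_ne_zero 2 (ne_of_gt (h y hy))
  refine intervalIntegral.integral_eq_sub_of_hasDerivAt (f := fun y => y / (1 + x * y)) ?_
    (hcont.intervalIntegrable)
  intro y hy
  have hne : (1 + x * y) ≠ 0 := ne_of_gt (h y hy)
  have h1 : HasDerivAt (fun y : ℝ => 1 + x * y) x y := by
    simpa using ((hasDerivAt_id y).const_mul x).const_add 1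
  have h2 := (hasDerivAt_id y).div h1 hne
  convert h2 using 1
  all_goals first | rfl | (simp only [id, one_mul]; field_simp; ring)

lemma int_inv_sub (c p q : ℝ) (h : ∀ x ∈ Set.uIcc p q, 0 < c - x) :
    ∫ x in p..q, (c - x)⁻¹ = Real.log (c - p) - Real.log (c - q) := by
  have hcont : ContinuousOn (fun x : ℝ => (c - x)⁻¹) (Set.uIcc p q) := by
    apply ContinuousOn.inv₀
    · exact (continuous_const.sub continuous_id).continuousOn
    · intro x hx; exact ne_of_gt (h x hx)
  have := intervalIntegral.integral_eq_sub_of_hasDerivAt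
    (f := fun x => -Real.log (c - x)) (f' := fun x : ℝ => (c - x)⁻¹) ?_ hcont.intervalIntegrable
  · rw [this]; ring
  · intro x hx
    have hne : c - x ≠ 0 := ne_of_gt (h x hx)
    have hin : HasDerivAt (fun x : ℝ => c - x) (-1) x := by
      simpa using (hasDerivAt_id x).const_sub c
    have := ((Real.hasDerivAt_log hne).comp x hin).neg
    convert this using 1
    all_goals first | rfl | (field_simp) | (simp)

lemma int_inv_add (c p q : ℝ) (h : ∀ x ∈ Set.uIcc p q, 0 < c + x) :
    ∫ x in p..q, (c + x)⁻¹ = Real.log (c + q) - Real.log (c + p) := by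
  have hcont : ContinuousOn (fun x : ℝ => (c + x)⁻¹) (Set.uIcc p q) := by
    apply ContinuousOn.inv₀
    · exact (continuous_const.add continuous_id).continuousOn
    · intro x hx; exact ne_of_gt (h x hx)
  refine intervalIntegral.integral_eq_sub_of_hasDerivAt
    (f := fun x => Real.log (c + x)) ?_ hcont.intervalIntegrable
  intro x hx
  have hne : c + x ≠ 0 := ne_of_gt (h x hx)
  have hin : HasDerivAt (fun x : ℝ => c + x) 1 x := by
    simpa using (hasDerivAt_id x).const_add c
  have := (Real.hasDerivAt_log hne).comp x hin
  convert this using 1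
  all_goals first | rfl | (field_simp) | (simp)

set_option maxHeartbeats 1000000 in
theorem natural_extension_measure (a b : ℝ)
    (ha : a < 0) (hb : 0 < b)
    (h1 : 1 ≤ -1 / a) (h2 : -1 / a ≤ b + 1)
    (h3 : a - 1 ≤ -1 / b) (h4 : -1 / b ≤ -1) :
    (∫ x in a..(1 - 1 / b), ∫ y in (-1 : ℝ)..0, ((1 + x * y) ^ 2)⁻¹) +
    (∫ x in (1 - 1 / b)..(a + 1), ∫ y in (-(1 : ℝ) / 2)..0, ((1 + x * y) ^ 2)⁻¹) +
    (∫ x in (b - 1)..(-1 / a - 1), ∫ y in (0 : ℝ)..(1 / 2), ((1 + x * y) ^ 2)⁻¹) +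
    (∫ x in (-1 / a - 1)..b, ∫ y in (0 : ℝ)..1, ((1 + x * y) ^ 2)⁻¹) =
      Real.log ((1 + b) * (1 - a)) := by
  -- basic bounds
  have f1 : -1 ≤ 1 * a := (le_div_iff_of_neg ha).mp h1
  have f2 : (b + 1) * a ≤ -1 := (div_le_iff_of_neg ha).mp h2
  have f3 : (a - 1) * b ≤ -1 := (le_div_iff₀ hb).mp h3
  have f4 : -1 ≤ -1 * b := (div_le_iff₀ hb).mp h4
  have h1' : 1 ≤ -(1/a) := by rwa [neg_div] at h1
  have h2' : -(1/a) ≤ b + 1 := by rwa [neg_div] at h2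
  have h3' : a - 1 ≤ -(1/b) := by rwa [neg_div] at h3
  have h4' : -(1/b) ≤ -1 := by rwa [neg_div] at h4
  have ha1 : -1 ≤ a := by linarith
  have hb2 : b ≤ 1 := by linarith
  have ha2 : a ≤ -1/2 := by
    nlinarith [mul_nonneg (by linarith : (0:ℝ) ≤ 1 - b) (by linarith : (0:ℝ) ≤ -a)]
  have hb1 : 1/2 ≤ b := by
    nlinarith [mul_nonneg (by linarith : (0:ℝ) ≤ a + 1) (by linarith : (0:ℝ) ≤ b)]
  -- endpoint orderings
  have e1 : a ≤ 1 - 1/b := by linarith [h3']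
  have r1b : (1:ℝ) - 1/b ≤ 0 := by linarith [h4']
  have r1a : (-1:ℝ) ≤ 1 - 1/b := by
    have : 1/b ≤ 2 := by rw [div_le_iff₀ hb]; linarith
    linarith
  have e2 : (1:ℝ) - 1/b ≤ a + 1 := by linarith
  have e3' : b ≤ -1/a := by
    rw [le_div_iff_of_neg ha]
    nlinarith [mul_nonneg (by linarith : (0:ℝ) ≤ a + 1) (by linarith : (0:ℝ) ≤ b)]
  have e3'' : b ≤ -(1/a) := by rwa [neg_div] at e3'
  have e3 : b - 1 ≤ -1/a - 1 := by rw [neg_div]; linarith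
  have e4 : -1/a - 1 ≤ b := by rw [neg_div]; linarith
  have rnia : -(1/a) ≤ 2 := by linarith
  -- Part 1
  have hEq1 : Set.EqOn (fun x => ∫ y in (-1:ℝ)..(0:ℝ), ((1 + x * y) ^ 2)⁻¹)
      (fun x => (1 - x)⁻¹) (Set.uIcc a (1 - 1/b)) := by
    intro x hx
    rw [Set.uIcc_of_le e1] at hx
    obtain ⟨hx1, hx2⟩ := hx
    show (∫ y in (-1:ℝ)..(0:ℝ), ((1 + x * y) ^ 2)⁻¹) = (1 - x)⁻¹
    have hxle : x ≤ 0 := by linarith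
    have hpos : (0:ℝ) < 1 - x := by linarith
    rw [inner_eq]
    · rw [show (1:ℝ) + x * (0:ℝ) = 1 by ring, show (1:ℝ) + x * (-1:ℝ) = 1 - x by ring]
      field_simp
      try ring
    · intro y hy
      rw [Set.uIcc_of_le (by norm_num : (-1:ℝ) ≤ (0:ℝ))] at hy
      obtain ⟨hy1, hy2⟩ := hy
      nlinarith [mul_nonneg (by linarith : (0:ℝ) ≤ -x) (by linarith : (0:ℝ) ≤ -y)]
  have hden1 : ∀ x ∈ Set.uIcc a (1 - 1/b), (0:ℝ) < 1 - x := by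
    intro x hx
    rw [Set.uIcc_of_le e1] at hx
    have := hx.2; linarith
  have I1 : (∫ x in a..(1 - 1/b), ∫ y in (-1:ℝ)..(0:ℝ), ((1 + x * y) ^ 2)⁻¹) = Real.log (1 - a) - Real.log (1/b) := by
    rw [intervalIntegral.integral_congr hEq1, int_inv_sub 1 a (1 - 1/b) hden1]
    congr 2 <;> ring
  -- Part 2
  have hEq2 : Set.EqOn (fun x => ∫ y in (-(1:ℝ)/2)..(0:ℝ), ((1 + x * y) ^ 2)⁻¹)
      (fun x => (2 - x)⁻¹) (Set.uIcc (1 - 1/b) (a + 1)) := by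
    intro x hx
    rw [Set.uIcc_of_le e2] at hx
    obtain ⟨hx1, hx2⟩ := hx
    show (∫ y in (-(1:ℝ)/2)..(0:ℝ), ((1 + x * y) ^ 2)⁻¹) = (2 - x)⁻¹
    have hxu : x ≤ 1/2 := by linarith
    have hxl : -1 ≤ x := by linarith
    have hpos : (0:ℝ) < 2 - x := by linarith
    rw [inner_eq]
    · rw [show (1:ℝ) + x * (0:ℝ) = 1 by ring, show (1:ℝ) + x * (-(1:ℝ)/2) = (2 - x)/2 by ring]
      field_simp
      try ring
    · intro y hy
      rw [Set.uIcc_of_le (by norm_num : (-(1:ℝ)/2) ≤ (0:ℝ))] at hy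
      obtain ⟨hy1, hy2⟩ := hy
      nlinarith [mul_nonneg (by linarith : (0:ℝ) ≤ 1/2 - x) (by linarith : (0:ℝ) ≤ -y)]
  have hden2 : ∀ x ∈ Set.uIcc (1 - 1/b) (a + 1), (0:ℝ) < 2 - x := by
    intro x hx
    rw [Set.uIcc_of_le e2] at hx
    have := hx.2; linarith
  have I2 : (∫ x in (1 - 1/b)..(a + 1), ∫ y in (-(1:ℝ)/2)..(0:ℝ), ((1 + x * y) ^ 2)⁻¹) = Real.log (1 + 1/b) - Real.log (1 - a) := by
    rw [intervalIntegral.integral_congr hEq2, int_inv_sub 2 (1 - 1/b) (a + 1) hden2]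
    congr 2 <;> ring
  -- Part 3
  have hEq3 : Set.EqOn (fun x => ∫ y in (0:ℝ)..(1/2:ℝ), ((1 + x * y) ^ 2)⁻¹)
      (fun x => (2 + x)⁻¹) (Set.uIcc (b - 1) (-1/a - 1)) := by
    intro x hx
    rw [Set.uIcc_of_le e3] at hx
    obtain ⟨hx1, hx2⟩ := hx
    show (∫ y in (0:ℝ)..(1/2:ℝ), ((1 + x * y) ^ 2)⁻¹) = (2 + x)⁻¹
    have hxl : -(1:ℝ)/2 ≤ x := by linarith [hb1]
    have hpos : (0:ℝ) < 2 + x := by linarith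
    rw [inner_eq]
    · rw [show (1:ℝ) + x * (1/2:ℝ) = (2 + x)/2 by ring, show (1:ℝ) + x * (0:ℝ) = 1 by ring]
      field_simp
      try ring
    · intro y hy
      rw [Set.uIcc_of_le (by norm_num : (0:ℝ) ≤ (1/2:ℝ))] at hy
      obtain ⟨hy1, hy2⟩ := hy
      nlinarith [mul_nonneg (by linarith : (0:ℝ) ≤ x + 1/2) (by linarith : (0:ℝ) ≤ y)]
  have hden3 : ∀ x ∈ Set.uIcc (b - 1) (-1/a - 1), (0:ℝ) < 2 + x := by
    intro x hx
    rw [Set.uIcc_of_le e3] at hx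
    have := hx.1; linarith
  have I3 : (∫ x in (b - 1)..(-1/a - 1), ∫ y in (0:ℝ)..(1/2:ℝ), ((1 + x * y) ^ 2)⁻¹) = Real.log (1 - 1/a) - Real.log (1 + b) := by
    rw [intervalIntegral.integral_congr hEq3, int_inv_add 2 (b - 1) (-1/a - 1) hden3]
    congr 2 <;> ring
  -- Part 4
  have hEq4 : Set.EqOn (fun x => ∫ y in (0:ℝ)..(1:ℝ), ((1 + x * y) ^ 2)⁻¹)
      (fun x => (1 + x)⁻¹) (Set.uIcc (-1/a - 1) b) := by
    intro x hx
    rw [Set.uIcc_of_le e4] at hx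
    obtain ⟨hx1, hx2⟩ := hx
    show (∫ y in (0:ℝ)..(1:ℝ), ((1 + x * y) ^ 2)⁻¹) = (1 + x)⁻¹
    have hxl : (0:ℝ) ≤ x := by
      have h0 : -(1/a) - 1 ≤ x := by rw [neg_div] at hx1; exact hx1
      linarith
    have hpos : (0:ℝ) < 1 + x := by linarith
    rw [inner_eq]
    · rw [show (1:ℝ) + x * (1:ℝ) = 1 + x by ring, show (1:ℝ) + x * (0:ℝ) = 1 by ring]
      field_simp
      try ring
    · intro y hy
      rw [Set.uIcc_of_le (by norm_num : (0:ℝ) ≤ (1:ℝ))] at hy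
      obtain ⟨hy1, hy2⟩ := hy
      nlinarith [mul_nonneg hxl (by linarith : (0:ℝ) ≤ y)]
  have hden4 : ∀ x ∈ Set.uIcc (-1/a - 1) b, (0:ℝ) < 1 + x := by
    intro x hx
    rw [Set.uIcc_of_le e4] at hx
    have h0 : -(1/a) - 1 ≤ x := by rw [neg_div] at hx; exact hx.1
    linarith
  have I4 : (∫ x in (-1/a - 1)..b, ∫ y in (0:ℝ)..(1:ℝ), ((1 + x * y) ^ 2)⁻¹) = Real.log (1 + b) - Real.log (-1/a) := by
    rw [intervalIntegral.integral_congr hEq4, int_inv_add 1 (-1/a - 1) b hden4]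
    congr 2 <;> ring
  rw [I1, I2, I3, I4]
  have hbne' : (1:ℝ)/b ≠ 0 := by positivity
  have hb1ne : (1:ℝ) + 1/b ≠ 0 := by positivity
  have hiapos : (0:ℝ) < -1/a := lt_of_lt_of_le one_pos h1
  have h1apos : (0:ℝ) < 1 - 1/a := by
    have : 1/a < 0 := div_neg_of_pos_of_neg one_pos ha
    linarith
  have key1 : Real.log (1 + 1/b) - Real.log (1/b) = Real.log (1 + b) := by
    rw [← Real.log_div hb1ne hbne']
    congr 1
    field_simp
    ring
  have key2 : Real.log (1 - 1/a) - Real.log (-1/a) = Real.log (1 - a) := by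
    rw [← Real.log_div (ne_of_gt h1apos) (ne_of_gt hiapos)]
    congr 1
    field_simp [ha.ne]
    try ring
  have final : Real.log ((1 + b) * (1 - a)) = Real.log (1 + b) + Real.log (1 - a) :=
    Real.log_mul (by linarith) (by linarith)
  linarith [key1, key2, final]
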